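/- Let P be a finite poset on {1,...,n} such that the Hasse diagram of P is a forest and the set of elements weakly below any element is an interval of integers (a non-interleaving forest). Then ∏_{i=1}^n 1/(∑_{j ≤_P i} u_j) = ∑_{σ ∈ L(P)} ∏_{k=1}^n 1/(u_{σ(1)}+···+u_{σ(k)}), where L(P) is the set of linear extensions of P (read as words σ = σ(1)···σ(n) such that σ(a) ≤_P σ(b) implies a ≤ b). -/

import Mathlib

open Finset

variable {n : ℕ} {F : Type*} [Field F]

/-- prefix-factor product, consuming the *reversed* word from the head. -/
def pfw (u : Fin n → F) : List (Fin n) → F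
  | [] => 1
  | (a :: t) => (((a :: t).map u).sum)⁻¹ * pfw u t

def rexts (le : Fin n → Fin n → Prop) [DecidableRel le] (A : Finset (Fin n)) :
    Finset (List (Fin n)) :=
  ((A.sort (· ≤ ·)).permutations.toFinset).filter fun l => l.Pairwise fun a b => ¬ le a b

lemma mem_rexts {le : Fin n → Fin n → Prop} [DecidableRel le] {A : Finset (Fin n)}
    {l : List (Fin n)} :
    l ∈ rexts le A ↔ l.Nodup ∧ l.toFinset = A ∧ l.Pairwise fun a b => ¬ le a b := by
  simp only [rexts, Finset.mem_filter, List.mem_toFinset, List.mem_permutations]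
  constructor
  · rintro ⟨hp, hpw⟩
    exact ⟨hp.nodup_iff.mpr (A.sort_nodup _), by
      rw [List.toFinset_eq_of_perm _ _ hp]; exact Finset.sort_toFinset A _, hpw⟩
  · rintro ⟨hn, hA, hpw⟩
    refine ⟨List.perm_of_nodup_nodup_toFinset_eq hn (A.sort_nodup _) ?_, hpw⟩
    rw [hA, Finset.sort_toFinset A _]

section Comb
variable (le : Fin n → Fin n → Prop) [DecidableRel le]

/-- a nonempty finite chain has a greatest element -/
lemma chain_greatest (hrefl : ∀ i, le i i) (htrans : ∀ i j k, le i j → le j k → le i k) :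
    ∀ (s : Finset (Fin n)), s.Nonempty → (∀ a ∈ s, ∀ b ∈ s, le a b ∨ le b a) →
      ∃ m ∈ s, ∀ x ∈ s, le x m := by
  intro s hs
  induction hs using Finset.Nonempty.cons_induction with
  | singleton a =>
    intro hc
    exact ⟨a, by simp, fun x hx => by
      rcases hc a (by simp) x hx with h | h
      · simp at hx; subst hx; exact h
      · exact h⟩
  | cons a s ha hs ih =>
    intro hc
    obtain ⟨m, hm, hgm⟩ := ih (fun x hx y hy => hc x (by simp [hx]) y (by simp [hy]))
    rcases hc a (by simp) m (by simp [hm]) with h | h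
    · exact ⟨m, by simp [hm], fun x hx => by
        rcases Finset.mem_cons.mp hx with rfl | hx
        · exact h
        · exact hgm x hx⟩
    · refine ⟨a, by simp, fun x hx => ?_⟩
      rcases Finset.mem_cons.mp hx with rfl | hx
      · exact hrefl x
      · exact htrans x m a (hgm x hx) h

variable (hrefl : ∀ i, le i i)
    (hantisymm : ∀ i j, le i j → le j i → i = j)
    (htrans : ∀ i j k, le i j → le j k → le i k)
    (hforest : ∀ i j k, le i j → le i k → le j k ∨ le k j)

/-- the set of maximal elements of `A` -/
def maxset (A : Finset (Fin n)) : Finset (Fin n) :=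
  A.filter fun m => ∀ i ∈ A, le m i → i = m

include hrefl hantisymm htrans hforest in
lemma unique_max_above {A : Finset (Fin n)} {j : Fin n} (hj : j ∈ A) :
    ∃! m, m ∈ (maxset le A).filter fun m => le j m := by
  -- the up-set of j within A
  set U := A.filter fun x => le j x with hU
  have hUne : U.Nonempty := ⟨j, by simp [hU, hj, hrefl j]⟩
  have hchain : ∀ a ∈ U, ∀ b ∈ U, le a b ∨ le b a := by
    intro a ha b hb
    simp only [hU, Finset.mem_filter] at ha hb
    exact hforest j a b ha.2 hb.2
  obtain ⟨m, hmU, hgm⟩ := chain_greatest le hrefl htrans U hUne hchain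
  simp only [hU, Finset.mem_filter] at hmU
  have hmax : m ∈ maxset le A := by
    simp only [maxset, Finset.mem_filter]
    refine ⟨hmU.1, fun i hi hmi => ?_⟩
    have hiU : i ∈ U := by simp [hU, hi, htrans j m i hmU.2 hmi]
    exact hantisymm i m (hgm i hiU) hmi
  refine ⟨m, by simp [Finset.mem_filter, hmax, hmU.2], ?_⟩
  intro m' hm'
  simp only [Finset.mem_filter, maxset] at hm' hmax
  rcases hforest j m' m hm'.2 hmU.2 with h | h
  · exact (hm'.1.2 m hmax.1 h).symm
  · exact hmax.2 m' hm'.1.1 h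

include hrefl hantisymm htrans hforest in
lemma sum_max (u : Fin n → F) (A : Finset (Fin n)) :
    ∑ m ∈ maxset le A, ∑ j ∈ A.filter (fun j => le j m), u j = ∑ j ∈ A, u j := by
  have : ∀ m ∈ maxset le A, ∑ j ∈ A.filter (fun j => le j m), u j
      = ∑ j ∈ A, if le j m then u j else 0 := fun m _ => Finset.sum_filter _ _
  rw [Finset.sum_congr rfl this, Finset.sum_comm]
  refine Finset.sum_congr rfl fun j hj => ?_
  obtain ⟨m, hm, hmu⟩ := unique_max_above le hrefl hantisymm htrans hforest hj
  simp only [Finset.mem_filter] at hm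
  rw [Finset.sum_eq_single m]
  · simp [hm.2]
  · intro b hb hbm
    rcases Decidable.em (le j b) with h | h
    · exact absurd (hmu b (by simp [Finset.mem_filter, hb, h])) hbm
    · simp [h]
  · intro hmm; exact absurd hm.1 hmm

end Comb

section MainLemma
variable (le : Fin n → Fin n → Prop) [DecidableRel le]

lemma rexts_decomp (hrefl : ∀ i, le i i) {A : Finset (Fin n)} (hA : A.Nonempty) :
    rexts le A = (maxset le A).biUnion
      (fun m => (rexts le (A.erase m)).image (List.cons m)) := by
  ext l
  simp only [Finset.mem_biUnion, Finset.mem_image]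
  constructor
  · intro hl
    rw [mem_rexts] at hl
    obtain ⟨hn, hfin, hpw⟩ := hl
    match l with
    | [] => simp at hfin; exact absurd hfin.symm (Finset.nonempty_iff_ne_empty.mp hA)
    | m :: t =>
      have hmt : m ∉ t := (List.nodup_cons.mp hn).1
      have htn : t.Nodup := (List.nodup_cons.mp hn).2
      have hins : insert m t.toFinset = A := by simpa using hfin
      have hmA : m ∈ A := by rw [← hins]; exact Finset.mem_insert_self _ _
      have hhead : ∀ b ∈ t, ¬ le m b := (List.pairwise_cons.mp hpw).1
      have htfin : t.toFinset = A.erase m := by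
        rw [← hins, Finset.erase_insert (by simpa using hmt)]
      refine ⟨m, ?_, t, ?_, rfl⟩
      · simp only [maxset, Finset.mem_filter]
        refine ⟨hmA, fun i hi hmi => ?_⟩
        by_contra hne
        have : i ∈ t := by
          rw [← List.mem_toFinset, htfin]
          exact Finset.mem_erase.mpr ⟨hne, hi⟩
        exact hhead i this hmi
      · exact mem_rexts.mpr ⟨htn, htfin, (List.pairwise_cons.mp hpw).2⟩
  · rintro ⟨m, hm, t, ht, rfl⟩
    rw [mem_rexts] at ht ⊢
    obtain ⟨htn, htfin, htpw⟩ := ht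
    simp only [maxset, Finset.mem_filter] at hm
    have hmt : m ∉ t := by
      rw [← List.mem_toFinset, htfin]; simp
    refine ⟨List.nodup_cons.mpr ⟨hmt, htn⟩, ?_, List.pairwise_cons.mpr ⟨?_, htpw⟩⟩
    · simp [htfin, Finset.insert_erase hm.1]
    · intro b hb hmb
      have hbA : b ∈ A.erase m := by rw [← htfin]; exact List.mem_toFinset.mpr hb
      exact (Finset.mem_erase.mp hbA).1 (hm.2 b (Finset.mem_erase.mp hbA).2 hmb)

lemma main_lemma (u : Fin n → F)
    (hrefl : ∀ i, le i i)
    (hantisymm : ∀ i j, le i j → le j i → i = j)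
    (htrans : ∀ i j k, le i j → le j k → le i k)
    (hforest : ∀ i j k, le i j → le i k → le j k ∨ le k j)
    (hne : ∀ s : Finset (Fin n), s.Nonempty → (∑ j ∈ s, u j) ≠ 0) :
    ∀ A : Finset (Fin n),
      ∏ i ∈ A, (∑ j ∈ A.filter (fun j => le j i), u j)⁻¹ = ∑ l ∈ rexts le A, pfw u l := by
  intro A
  induction A using Finset.strongInduction with
  | _ A ih =>
  rcases A.eq_empty_or_nonempty with rfl | hA
  · have : rexts le (∅ : Finset (Fin n)) = {[]} := by
      ext l
      rw [mem_rexts]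
      simp only [Finset.mem_singleton, List.toFinset_eq_empty_iff]
      constructor
      · rintro ⟨_, rfl, _⟩; rfl
      · rintro rfl; simp
    simp [this, pfw]
  · -- notation
    set S : Fin n → F := fun i => ∑ j ∈ A.filter (fun j => le j i), u j with hS
    have hSne : ∀ i ∈ A, S i ≠ 0 := fun i hi =>
      hne _ ⟨i, Finset.mem_filter.mpr ⟨hi, hrefl i⟩⟩
    set U : F := ∑ j ∈ A, u j with hU
    have hUne : U ≠ 0 := hne _ hA
    rw [rexts_decomp le hrefl hA, Finset.sum_biUnion, ]
    · -- sum over maxset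
      have hstep : ∀ m ∈ maxset le A,
          ∑ l ∈ (rexts le (A.erase m)).image (List.cons m), pfw u l
            = U⁻¹ * (S m * ∏ i ∈ A, (S i)⁻¹) := by
        intro m hm
        have hmA : m ∈ A := Finset.mem_filter.mp hm |>.1
        rw [Finset.sum_image (fun a _ b _ h => by injection h)]
        have hval : ∀ t ∈ rexts le (A.erase m), pfw u (m :: t) = U⁻¹ * pfw u t := by
          intro t ht
          rw [mem_rexts] at ht
          show (((m :: t).map u).sum)⁻¹ * pfw u t = U⁻¹ * pfw u t
          congr 1
          have hnodup : (m :: t).Nodup := List.nodup_cons.mpr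
            ⟨by rw [← List.mem_toFinset, ht.2.1]; simp, ht.1⟩
          rw [← List.sum_toFinset u hnodup]
          congr 1
          simp [ht.2.1, Finset.insert_erase hmA, hU]
        rw [Finset.sum_congr rfl hval, ← Finset.mul_sum, ← ih _ (Finset.erase_ssubset hmA)]
        congr 1
        have hfil : ∀ i ∈ A.erase m,
            (A.erase m).filter (fun j => le j i) = A.filter (fun j => le j i) := by
          intro i hi
          ext j
          simp only [Finset.mem_filter, Finset.mem_erase]
          constructor
          · rintro ⟨⟨_, hj⟩, hji⟩; exact ⟨hj, hji⟩
          · rintro ⟨hj, hji⟩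
            refine ⟨⟨fun hjm => ?_, hj⟩, hji⟩
            subst hjm
            exact (Finset.mem_erase.mp hi).1 ((Finset.mem_filter.mp hm).2 i
              (Finset.mem_erase.mp hi).2 hji)
        rw [Finset.prod_congr rfl (fun i hi => by rw [hfil i hi])]
        -- now:  ∏_{i ∈ A.erase m} S i ⁻¹ = S m * ∏_{i ∈ A} S i⁻¹
        rw [← Finset.prod_erase_mul A _ hmA,
          mul_comm (∏ x ∈ A.erase m, (S x)⁻¹) ((S m)⁻¹), ← mul_assoc,
          mul_inv_cancel₀ (hSne m hmA), one_mul]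
      rw [Finset.sum_congr rfl hstep, ← Finset.mul_sum, ← Finset.sum_mul,
        sum_max le hrefl hantisymm htrans hforest u A, ← hU,
        inv_mul_cancel_left₀ hUne]
    · -- pairwise disjoint images
      intro m hm m' hm' hmm'
      simp only [Function.onFun]
      rw [Finset.disjoint_left]
      rintro l hl hl'
      simp only [Finset.mem_image] at hl hl'
      obtain ⟨t, _, rfl⟩ := hl
      obtain ⟨t', _, h⟩ := hl'
      exact hmm' (by injection h.symm)

end MainLemma

lemma pfw_reverse (u : Fin n → F) (w : List (Fin n)) :
    pfw u w.reverse = ∏ k ∈ Finset.range w.length, (((w.map u).take (k + 1)).sum)⁻¹ := by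
  induction w using List.reverseRecOn with
  | nil => simp [pfw]
  | append_singleton w a ih =>
    rw [List.reverse_append]
    show (((a :: w.reverse).map u).sum)⁻¹ * pfw u w.reverse = _
    have hsum : ((a :: w.reverse).map u).sum = ((w ++ [a]).map u).sum := by
      simp [List.sum_reverse, add_comm]
    rw [hsum, ih]
    rw [List.length_append, List.length_cons, List.length_nil, Finset.prod_range_succ]
    rw [mul_comm]
    congr 1
    · refine Finset.prod_congr rfl fun k hk => ?_
      rw [Finset.mem_range] at hk
      congr 2
      rw [List.map_append]
      exact (List.take_append_of_le_length (by simpa using hk)).symm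
    · congr 2
      rw [List.map_append]
      exact (List.take_of_length_le (by simp)).symm

lemma pfw_ofFn (u : Fin n → F) (σ : Equiv.Perm (Fin n)) :
    pfw u (List.ofFn ⇑σ).reverse = ∏ k : Fin n, (∑ j ∈ Finset.Iic k, u (σ j))⁻¹ := by
  rw [pfw_reverse, List.length_ofFn, List.map_ofFn,
    ← Fin.prod_univ_eq_prod_range (fun k => (((List.ofFn (u ∘ ⇑σ)).take (k + 1)).sum)⁻¹) n]
  refine Finset.prod_congr rfl fun k _ => ?_
  rw [List.sum_take_ofFn]
  congr 1
  refine Finset.sum_congr ?_ fun j _ => rfl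
  ext j
  simp only [Finset.mem_filter, Finset.mem_Iic, Finset.mem_univ, true_and]
  rw [Nat.lt_succ_iff, ← Fin.le_def]

lemma sum_rexts_eq (u : Fin n → F) (le : Fin n → Fin n → Prop) [DecidableRel le] :
    ∑ σ ∈ Finset.univ.filter
        (fun σ : Equiv.Perm (Fin n) => ∀ a b : Fin n, le (σ a) (σ b) → a ≤ b),
      ∏ k : Fin n, (∑ j ∈ Finset.Iic k, u (σ j))⁻¹
    = ∑ l ∈ rexts le Finset.univ, pfw u l := by
  refine Finset.sum_bij (fun σ _ => (List.ofFn ⇑σ).reverse) ?_ ?_ ?_ ?_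
  · intro σ hσ
    simp only [Finset.mem_filter, Finset.mem_univ, true_and] at hσ
    rw [mem_rexts]
    refine ⟨List.nodup_reverse.mpr (List.nodup_ofFn.mpr σ.injective), ?_, ?_⟩
    · ext x
      simp only [List.toFinset_reverse, List.mem_toFinset, List.mem_ofFn, Set.mem_range,
        Finset.mem_univ, iff_true]
      exact σ.surjective x
    · rw [List.pairwise_reverse, List.pairwise_ofFn]
      intro i j hij hle
      exact absurd (hσ j i hle) (not_le.mpr hij)
  · intro σ _ τ _ h
    have h2 := List.reverse_injective h
    exact Equiv.coe_fn_injective (List.ofFn_injective h2)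
  · intro l hl
    rw [mem_rexts] at hl
    obtain ⟨hn, hfin, hpw⟩ := hl
    set w := l.reverse with hw
    have hwn : w.Nodup := List.nodup_reverse.mpr hn
    have hwlen : w.length = n := by
      have := List.toFinset_card_of_nodup hn
      rw [hfin, Finset.card_univ, Fintype.card_fin] at this
      simp [hw, ← this]
    have hinj : Function.Injective (fun i : Fin n => w.get (Fin.cast hwlen.symm i)) := by
      intro a b hab
      have := List.nodup_iff_injective_get.mp hwn hab
      exact Fin.cast_injective _ this
    obtain ⟨hbij⟩ : Nonempty (Function.Bijective
        (fun i : Fin n => w.get (Fin.cast hwlen.symm i))) :=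
      ⟨(Finite.injective_iff_bijective).mp hinj⟩
    refine ⟨Equiv.ofBijective _ hbij, ?_, ?_⟩
    · simp only [Finset.mem_filter, Finset.mem_univ, true_and]
      intro a b hab
      by_contra hba
      push_neg at hba
      have hpw' : w.Pairwise (fun a b => ¬ le b a) := List.pairwise_reverse.mpr hpw
      have := (List.pairwise_iff_get.mp hpw') (Fin.cast hwlen.symm b) (Fin.cast hwlen.symm a)
        (by simpa using hba)
      exact this (by simpa [Equiv.ofBijective_apply] using hab)
    · have hofn : List.ofFn (fun i : Fin n => w.get (Fin.cast hwlen.symm i)) = w := by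
        refine List.ext_get (by simp [hwlen]) fun i h1 h2 => ?_
        rw [List.get_ofFn]
        congr 1
      show (List.ofFn ⇑(Equiv.ofBijective _ hbij)).reverse = l
      have : ⇑(Equiv.ofBijective _ hbij) = fun i : Fin n => w.get (Fin.cast hwlen.symm i) := rfl
      rw [this, hofn, hw, List.reverse_reverse]
  · intro σ hσ
    exact (pfw_ofFn u σ).symm

theorem noninterleaving_forest_fraction_eq_sum_linear_extensions (n : ℕ)
    (le : Fin n → Fin n → Prop) [DecidableRel le]
    (hrefl : ∀ i, le i i)
    (hantisymm : ∀ i j, le i j → le j i → i = j)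
    (htrans : ∀ i j k, le i j → le j k → le i k)
    (hforest : ∀ i j k, le i j → le i k → le j k ∨ le k j)
    (hinterval : ∀ i a b c : Fin n, le a i → le c i → a ≤ b → b ≤ c → le b i) :
    letI F := FractionRing (MvPolynomial (Fin n) ℚ)
    letI u : Fin n → F :=
      fun i => algebraMap (MvPolynomial (Fin n) ℚ) F (MvPolynomial.X i)
    ∏ i : Fin n, (∑ j ∈ Finset.univ.filter (fun j => le j i), u j)⁻¹ =
      ∑ σ ∈ Finset.univ.filter
          (fun σ : Equiv.Perm (Fin n) => ∀ a b : Fin n, le (σ a) (σ b) → a ≤ b),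
        ∏ k : Fin n, (∑ j ∈ Finset.Iic k, u (σ j))⁻¹ := by
  set F := FractionRing (MvPolynomial (Fin n) ℚ)
  set u : Fin n → F :=
    fun i => algebraMap (MvPolynomial (Fin n) ℚ) F (MvPolynomial.X i) with hu
  have hne : ∀ s : Finset (Fin n), s.Nonempty → (∑ j ∈ s, u j) ≠ 0 := by
    intro s hs h0
    have hinj : Function.Injective (algebraMap (MvPolynomial (Fin n) ℚ) F) :=
      IsFractionRing.injective _ _
    rw [hu, ← map_sum] at h0
    have hp : (∑ j ∈ s, MvPolynomial.X j : MvPolynomial (Fin n) ℚ) = 0 := by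
      apply hinj
      rw [h0, map_zero]
    have := congrArg (MvPolynomial.eval fun _ => (1 : ℚ)) hp
    simp only [map_sum, MvPolynomial.eval_X, Finset.sum_const, nsmul_eq_mul, mul_one,
      map_zero] at this
    rw [Nat.cast_eq_zero, Finset.card_eq_zero] at this
    exact Finset.nonempty_iff_ne_empty.mp hs this
  rw [main_lemma le u hrefl hantisymm htrans hforest hne Finset.univ,
    sum_rexts_eq u le]
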